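/- Let B be a finite left brace with |B| > 1 and Soc(B) = {0}, and let X ⊆ B be a transitive cycle base of B. Then the group homomorphism Φ : (B,∘) → Sym(X) sending b to the restriction of λ_b to X (well defined since λ_b(X) = X) is injective, and its image equals the subgroup of Sym(X) generated by {λ_x|_X : x ∈ X}. In particular (B,∘) is isomorphic to the permutation group G(X) associated to the cycle set X. -/

import Mathlib

/-- A left brace structure on an additive abelian group `A`: a group operation `mul`
(with identity `one` and inverses `inv`) satisfying `a ∘ (b + c) + a = a ∘ b + a ∘ c`. -/
structure LeftBrace (A : Type*) [AddCommGroup A] where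
  mul : A → A → A
  one : A
  inv : A → A
  mul_assoc' : ∀ a b c, mul (mul a b) c = mul a (mul b c)
  one_mul' : ∀ a, mul one a = a
  mul_one' : ∀ a, mul a one = a
  inv_mul' : ∀ a, mul (inv a) a = one
  mul_inv' : ∀ a, mul a (inv a) = one
  compat : ∀ a b c, mul a (b + c) + a = mul a b + mul a c

namespace LeftBrace

variable {A : Type*} [AddCommGroup A]

/-- The map `λ_a : b ↦ -a + a ∘ b`. -/
def lam (B : LeftBrace A) (a b : A) : A := -a + B.mul a b

/-- The cycle set operation `x · y := λ_x⁻¹ (y)` associated to a left brace. -/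
noncomputable def cop (B : LeftBrace A) (x y : A) : A :=
  @Function.invFun A A ⟨0⟩ (B.lam x) y

/-- An ideal of a left brace: a normal subgroup of `(A, ∘)` invariant under all `λ_a`. -/
def IsIdeal (B : LeftBrace A) (I : Set A) : Prop :=
  B.one ∈ I ∧ (∀ a ∈ I, ∀ b ∈ I, B.mul a b ∈ I) ∧ (∀ a ∈ I, B.inv a ∈ I) ∧
    (∀ g : A, ∀ a ∈ I, B.mul (B.mul g a) (B.inv g) ∈ I) ∧
    (∀ g : A, ∀ a ∈ I, B.lam g a ∈ I)

variable (B : LeftBrace A)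

lemma mul_zero' (a : A) : B.mul a 0 = a := by
  have h := B.compat a 0 0
  rw [add_zero] at h
  exact add_left_cancel h.symm

lemma one_eq_zero : B.one = 0 := by
  have h1 := B.one_mul' 0
  rw [B.mul_zero' B.one] at h1
  exact h1

lemma zero_mul' (b : A) : B.mul 0 b = b := by
  rw [← B.one_eq_zero]; exact B.one_mul' b

lemma mul_add' (a b c : A) : B.mul a (b + c) = B.mul a b + B.mul a c - a :=
  eq_sub_of_add_eq (B.compat a b c)

lemma mul_neg' (a b : A) : B.mul a (-b) = a + a - B.mul a b := by
  have h := B.compat a b (-b)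
  rw [add_neg_cancel, B.mul_zero'] at h
  rw [h]; abel

lemma lam_add (a b c : A) : B.lam a (b + c) = B.lam a b + B.lam a c := by
  simp only [lam, B.mul_add']; abel

lemma lam_zero_right (a : A) : B.lam a 0 = 0 := by
  simp [lam, B.mul_zero']

lemma lam_zero_left (b : A) : B.lam 0 b = b := by
  simp [lam, B.zero_mul']

lemma lam_mul (a b c : A) : B.lam (B.mul a b) c = B.lam a (B.lam b c) := by
  simp only [lam, B.mul_add', B.mul_neg', ← B.mul_assoc']
  abel

lemma mul_eq_add_lam (a b : A) : B.mul a b = a + B.lam a b := by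
  simp [lam]

end LeftBrace

theorem stmt10 {A : Type*} [AddCommGroup A] [Finite A] (B : LeftBrace A)
    (hcard : 1 < Nat.card A)
    -- Soc(B) = {0}
    (hsoc : {a : A | ∀ b, a + b = B.mul a b} = {0})
    -- X is a transitive cycle base: an orbit of the λ-action generating (A, +)
    (X : Set A) (hne : X.Nonempty)
    (hclosed : ∀ a : A, ∀ x ∈ X, B.lam a x ∈ X)
    (horbit : ∀ x ∈ X, ∀ y ∈ X, ∃ a : A, B.lam a x = y)
    (hgen : AddSubgroup.closure X = ⊤)
    -- Φ sends b to the restriction of λ_b to X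
    (Φ : A → Equiv.Perm X)
    (hΦ : ∀ (b : A) (x : X), ((Φ b x : X) : A) = B.lam b (x : A)) :
    -- Φ is a group homomorphism from (B, ∘) to Sym(X)
    (∀ a b : A, Φ (B.mul a b) = Φ a * Φ b) ∧
    -- Φ is injective
    Function.Injective Φ ∧
    -- the image of Φ is the subgroup generated by the restrictions λ_x|_X, x ∈ X
    Set.range Φ = (Subgroup.closure {p : Equiv.Perm X | ∃ x : X, p = Φ (x : A)} : Set (Equiv.Perm X)) ∧
    -- in particular (B, ∘) is isomorphic to the permutation group G(X) generated by the σ_x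
    ∃ e : A ≃ (Subgroup.closure {p : Equiv.Perm X | ∃ x : X, p = (Φ (x : A))⁻¹} :
        Subgroup (Equiv.Perm X)),
      ∀ a b : A, ((e (B.mul a b) : Equiv.Perm X)) = (e a : Equiv.Perm X) * (e b : Equiv.Perm X) := by
  classical
  -- basic facts about Φ
  have hΦext : ∀ {p q : Equiv.Perm X}, (∀ x : X, ((p x : X) : A) = ((q x : X) : A)) → p = q := by
    intro p q h
    apply Equiv.ext
    intro x
    exact Subtype.ext (h x)
  have hhom : ∀ a b : A, Φ (B.mul a b) = Φ a * Φ b := by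
    intro a b
    apply hΦext
    intro x
    rw [hΦ, Equiv.Perm.mul_apply, hΦ, hΦ, B.lam_mul]
  have hΦ0 : Φ 0 = 1 := by
    apply hΦext
    intro x
    rw [hΦ, B.lam_zero_left, Equiv.Perm.one_apply]
  have hΦinv : ∀ a : A, Φ (B.inv a) = (Φ a)⁻¹ := by
    intro a
    have : Φ (B.inv a) * Φ a = 1 := by
      rw [← hhom, B.inv_mul', B.one_eq_zero, hΦ0]
    exact eq_inv_of_mul_eq_one_left this
  -- injectivity
  have hinj : Function.Injective Φ := by
    intro a b hab
    set c := B.mul (B.inv a) b with hc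
    have h1 : Φ c = 1 := by
      rw [hc, hhom, hΦinv, hab, inv_mul_cancel]
    have hX : ∀ x ∈ X, B.lam c x = x := by
      intro x hx
      have h2 := congrArg (fun p : Equiv.Perm X => ((p ⟨x, hx⟩ : X) : A)) h1
      simpa [hΦ] using h2
    have hall : ∀ d : A, B.lam c d = d := by
      let S : AddSubgroup A :=
        { carrier := {d | B.lam c d = d}
          add_mem' := by
            intro p q hp hq
            simp only [Set.mem_setOf_eq] at *
            rw [B.lam_add, hp, hq]
          zero_mem' := B.lam_zero_right c
          neg_mem' := by
            intro p hp
            simp only [Set.mem_setOf_eq] at *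
            have h3 := B.lam_add c p (-p)
            rw [add_neg_cancel, B.lam_zero_right, hp] at h3
            have := neg_eq_of_add_eq_zero_right h3.symm
            rw [← this] }
      intro d
      have : (⊤ : AddSubgroup A) ≤ S := by
        rw [← hgen]
        exact AddSubgroup.closure_le S |>.mpr hX
      exact this (AddSubgroup.mem_top d)
    have hcsoc : c ∈ {a : A | ∀ b, a + b = B.mul a b} := by
      intro b'
      rw [B.mul_eq_add_lam, hall b']
    rw [hsoc] at hcsoc
    have hc0 : c = 0 := hcsoc
    have : B.mul a c = B.mul a (B.mul (B.inv a) b) := by rw [hc]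
    rw [hc0, B.mul_zero', ← B.mul_assoc', B.mul_inv', B.one_mul'] at this
    exact this
  -- the image
  set gens : Set (Equiv.Perm X) := {p : Equiv.Perm X | ∃ x : X, p = Φ (x : A)} with hgens
  set Hg : Subgroup (Equiv.Perm X) := Subgroup.closure gens with hHg
  have hsub : ∀ a : A, Φ a ∈ Hg := by
    have key : ∀ a ∈ AddSubgroup.closure X, ∀ b : A, Φ b ∈ Hg → Φ (b + a) ∈ Hg := by
      intro a ha
      induction ha using AddSubgroup.closure_induction with
      | mem x hx =>
        intro b hb
        have hx' : B.lam (B.inv b) x ∈ X := hclosed _ _ hx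
        have hbx : b + x = B.mul b (B.lam (B.inv b) x) := by
          rw [B.mul_eq_add_lam]
          congr 1
          rw [← B.lam_mul, B.mul_inv', B.one_eq_zero, B.lam_zero_left]
        rw [hbx, hhom]
        refine mul_mem hb (Subgroup.subset_closure ?_)
        exact ⟨⟨_, hx'⟩, rfl⟩
      | zero =>
        intro b hb
        rwa [add_zero]
      | add a a' ha ha' iha iha' =>
        intro b hb
        rw [← add_assoc]
        exact iha' _ (iha _ hb)
      | neg a ha iha =>
        have hk : ∀ k : ℕ, ∀ b : A, Φ b ∈ Hg → Φ (b + k • a) ∈ Hg := by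
          intro k
          induction k with
          | zero => intro b hb; simpa using hb
          | succ k ih =>
            intro b hb
            rw [succ_nsmul, ← add_assoc]
            exact iha _ (ih _ hb)
        intro b hb
        have hn : 0 < addOrderOf a := addOrderOf_pos a
        have hna : (addOrderOf a) • a = 0 := addOrderOf_nsmul_eq_zero a
        have hneg : -a = (addOrderOf a - 1) • a := by
          have : (addOrderOf a - 1) • a + a = 0 := by
            rw [← succ_nsmul, Nat.sub_add_cancel hn, hna]
          exact neg_eq_of_add_eq_zero_left this
        rw [hneg]
        exact hk _ _ hb
    intro a
    have ha : a ∈ AddSubgroup.closure X := by rw [hgen]; exact AddSubgroup.mem_top a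
    have := key a ha 0 (by rw [hΦ0]; exact one_mem Hg)
    rwa [zero_add] at this
  have hrange : Set.range Φ = (Hg : Set (Equiv.Perm X)) := by
    ext p
    constructor
    · rintro ⟨a, rfl⟩
      exact hsub a
    · intro hp
      let R : Subgroup (Equiv.Perm X) :=
        { carrier := Set.range Φ
          one_mem' := ⟨0, hΦ0⟩
          mul_mem' := by
            rintro _ _ ⟨a, rfl⟩ ⟨b, rfl⟩
            exact ⟨B.mul a b, hhom a b⟩
          inv_mem' := by
            rintro _ ⟨a, rfl⟩
            exact ⟨B.inv a, hΦinv a⟩ }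
      have hle : Hg ≤ R := by
        apply Subgroup.closure_le R |>.mpr
        rintro q ⟨x, rfl⟩
        exact ⟨(x : A), rfl⟩
      exact hle hp
  refine ⟨hhom, hinj, hrange, ?_⟩
  -- the isomorphism
  set gens' : Set (Equiv.Perm X) := {p : Equiv.Perm X | ∃ x : X, p = (Φ (x : A))⁻¹} with hgens'
  have hHH : Subgroup.closure gens' = Hg := by
    apply le_antisymm
    · apply Subgroup.closure_le Hg |>.mpr
      rintro p ⟨x, rfl⟩
      exact inv_mem (Subgroup.subset_closure ⟨x, rfl⟩)
    · apply Subgroup.closure_le _ |>.mpr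
      rintro p ⟨x, rfl⟩
      have hmem : (Φ (x : A))⁻¹ ∈ Subgroup.closure gens' :=
        Subgroup.subset_closure ⟨x, rfl⟩
      simpa using inv_mem hmem
  let f : A → (Subgroup.closure gens' : Subgroup (Equiv.Perm X)) :=
    fun a => ⟨Φ a, by rw [hHH]; exact hsub a⟩
  have hbij : Function.Bijective f := by
    constructor
    · intro a b h
      exact hinj (congrArg Subtype.val h)
    · rintro ⟨g, hg⟩
      rw [hHH] at hg
      have : g ∈ Set.range Φ := by rw [hrange]; exact hg
      obtain ⟨a, ha⟩ := this
      exact ⟨a, Subtype.ext ha⟩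
  refine ⟨Equiv.ofBijective f hbij, ?_⟩
  intro a b
  show Φ (B.mul a b) = Φ a * Φ b
  exact hhom a b
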